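/- arXiv:2003.09413 — 9 statements merged into one kernel-verified Lean document; each statement's English description precedes it below -/
import Mathlib

section
/- Let α and β be nonzero scalars with |α| ≥ |β|, and let {f_n}_{n=1}^∞ be a Bessel sequence in a complex Hilbert space H. Then {f_n}_{n=1}^∞ is complete in H if and only if {α f_n + β f_{n+1}}_{n=1}^∞ is complete in H. -/
/-- A sequence `g` in a complex Hilbert space is a Bessel sequence. -/
def IsBessel {H : Type*} [NormedAddCommGroup H] [InnerProductSpace ℂ H]
    (g : ℕ → H) : Prop :=
  ∃ B : ℝ, 0 < B ∧ ∀ x : H,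
    Summable (fun n => ‖(inner ℂ x (g n) : ℂ)‖ ^ 2) ∧
    ∑' n, ‖(inner ℂ x (g n) : ℂ)‖ ^ 2 ≤ B * ‖x‖ ^ 2

/-- A sequence is complete if its closed linear span is the whole space,
i.e. its linear span is dense. -/
def IsComplete' {H : Type*} [NormedAddCommGroup H] [InnerProductSpace ℂ H]
    (g : ℕ → H) : Prop :=
  Dense (↑(Submodule.span ℂ (Set.range g)) : Set H)

open scoped InnerProductSpace in
lemma isComplete'_iff {H : Type*} [NormedAddCommGroup H] [InnerProductSpace ℂ H]
    [CompleteSpace H] (g : ℕ → H) :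
    IsComplete' g ↔ ∀ x : H, (∀ n, (inner ℂ (g n) x : ℂ) = 0) → x = 0 := by
  rw [IsComplete', Submodule.dense_iff_topologicalClosure_eq_top,
    Submodule.topologicalClosure_eq_top_iff, Submodule.eq_bot_iff]
  constructor
  · intro h x hx
    refine h x ?_
    rw [Submodule.mem_orthogonal]
    intro u hu
    induction hu using Submodule.span_induction with
    | mem u hu => obtain ⟨n, rfl⟩ := hu; exact hx n
    | zero => simp
    | add u v _ _ h1 h2 => rw [inner_add_left, h1, h2, add_zero]
    | smul c u _ h1 => rw [inner_smul_left, h1, mul_zero]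
  · intro h x hx
    refine h x fun n => ?_
    exact (Submodule.mem_orthogonal _ _).1 hx _
      (Submodule.subset_span (Set.mem_range_self n))

open scoped InnerProductSpace in
theorem stmt1 {H : Type*} [NormedAddCommGroup H] [InnerProductSpace ℂ H]
    [CompleteSpace H] (α β : ℂ) (hα : α ≠ 0) (hβ : β ≠ 0) (hαβ : ‖β‖ ≤ ‖α‖)
    (f : ℕ → H) (hF : IsBessel f) :
    IsComplete' f ↔ IsComplete' (fun n => α • f n + β • f (n + 1)) := by
  rw [isComplete'_iff, isComplete'_iff]
  constructor
  · intro h x hx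
    -- a n = ⟪f n, x⟫
    set a : ℕ → ℂ := fun n => (inner ℂ (f n) x : ℂ) with ha
    have key : ∀ n, (starRingEnd ℂ) α * a n + (starRingEnd ℂ) β * a (n + 1) = 0 := by
      intro n
      have := hx n
      simpa [inner_add_left, inner_smul_left, mul_comm] using this
    -- norms nondecreasing
    have hmono : ∀ n, ‖a n‖ ≤ ‖a (n + 1)‖ := by
      intro n
      have h1 : (starRingEnd ℂ) β * a (n + 1) = -((starRingEnd ℂ) α * a n) := by
        have := key n; linear_combination this
      have h2 : ‖β‖ * ‖a (n + 1)‖ = ‖α‖ * ‖a n‖ := by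
        have := congrArg norm h1
        simpa [norm_mul] using this
      by_contra hlt
      push_neg at hlt
      have hβ' : 0 < ‖β‖ := norm_pos_iff.2 hβ
      nlinarith [norm_nonneg (a n), norm_nonneg (a (n+1))]
    have hmono' : ∀ m n, m ≤ n → ‖a m‖ ≤ ‖a n‖ := by
      intro m n hmn
      induction n, hmn using Nat.le_induction with
      | base => exact le_refl _
      | succ n hmn ih => exact ih.trans (hmono n)
    -- Bessel gives summability, hence a n → 0
    obtain ⟨B, hB, hsum⟩ := hF
    have hs := (hsum x).1
    have htend : Filter.Tendsto (fun n => ‖(inner ℂ x (f n) : ℂ)‖ ^ 2)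
        Filter.atTop (nhds 0) := hs.tendsto_atTop_zero
    have hnorm : ∀ n, ‖a n‖ = ‖(inner ℂ x (f n) : ℂ)‖ := by
      intro n
      exact norm_inner_symm (f n) x
    have hzero : ∀ m, a m = 0 := by
      intro m
      have hle : ‖a m‖ ^ 2 ≤ 0 := by
        refine ge_of_tendsto htend ?_
        filter_upwards [Filter.eventually_ge_atTop m] with n hn
        rw [← hnorm n]
        exact pow_le_pow_left₀ (norm_nonneg _) (hmono' m n hn) 2
      have : ‖a m‖ = 0 := by nlinarith [norm_nonneg (a m), sq_nonneg (‖a m‖)]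
      exact norm_eq_zero.1 this
    exact h x fun n => hzero n
  · intro h x hx
    refine h x fun n => ?_
    simp only [inner_add_left, inner_smul_left, hx n, hx (n + 1), mul_zero, add_zero]
end

section
/- Let {f_n}_{n=1}^∞ be a sequence in a complex Hilbert space H, let α be a nonzero scalar and β any scalar, and set M = {α f_n + β f_{n+1}}_{n=1}^∞ and N = {α f_n − β f_{n+1}}_{n=1}^∞. Then {f_n}_{n=1}^∞ is a frame for H if and only if the union family M ∪ N (the combined indexed family consisting of all elements α f_n + β f_{n+1} and all elements α f_n − β f_{n+1}) is a frame for H. -/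
lemma hasSum_elim' {u v : ℕ → ℝ} {a b : ℝ} (hu : HasSum u a) (hv : HasSum v b) :
    HasSum (Sum.elim u v) (a + b) := by
  refine HasSum.add_isCompl Set.isCompl_range_inl_range_inr ?_ ?_
  · exact Sum.inl_injective.hasSum_range_iff.2 (by simpa [Function.comp] using hu)
  · exact Sum.inr_injective.hasSum_range_iff.2 (by simpa [Function.comp] using hv)

lemma key_id (y z : ℂ) : ‖y + z‖ ^ 2 + ‖y - z‖ ^ 2 = 2 * (‖y‖ ^ 2 + ‖z‖ ^ 2) := by
  have := parallelogram_law_with_norm ℂ y z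
  linarith

/-- A family `g` indexed by `ι` in a complex Hilbert space is a frame. -/
def IsFrame {H : Type*} [NormedAddCommGroup H] [InnerProductSpace ℂ H]
    {ι : Type*} (g : ι → H) : Prop :=
  ∃ A B : ℝ, 0 < A ∧ 0 < B ∧ ∀ x : H,
    Summable (fun i => ‖(inner ℂ x (g i) : ℂ)‖ ^ 2) ∧
    A * ‖x‖ ^ 2 ≤ ∑' i, ‖(inner ℂ x (g i) : ℂ)‖ ^ 2 ∧
    ∑' i, ‖(inner ℂ x (g i) : ℂ)‖ ^ 2 ≤ B * ‖x‖ ^ 2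

theorem stmt2 {H : Type*} [NormedAddCommGroup H] [InnerProductSpace ℂ H]
    [CompleteSpace H] (α β : ℂ) (hα : α ≠ 0) (f : ℕ → H) :
    IsFrame f ↔
      IsFrame (Sum.elim (fun n : ℕ => α • f n + β • f (n + 1))
        (fun n : ℕ => α • f n - β • f (n + 1))) := by
  have hα2 : (0:ℝ) < ‖α‖ ^ 2 := pow_pos (norm_pos_iff.2 hα) 2
  -- pointwise key identity
  have key : ∀ (x : H) (n : ℕ),
      ‖(inner ℂ x (α • f n + β • f (n + 1)) : ℂ)‖ ^ 2 +
        ‖(inner ℂ x (α • f n - β • f (n + 1)) : ℂ)‖ ^ 2 =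
      2 * (‖α‖ ^ 2 * ‖(inner ℂ x (f n) : ℂ)‖ ^ 2 +
        ‖β‖ ^ 2 * ‖(inner ℂ x (f (n + 1)) : ℂ)‖ ^ 2) := by
    intro x n
    rw [inner_add_right, inner_sub_right, inner_smul_right, inner_smul_right,
      key_id]
    simp [norm_mul, mul_pow]
  constructor
  · rintro ⟨A, B, hA, hB, hfr⟩
    refine ⟨2 * ‖α‖ ^ 2 * A, 2 * (‖α‖ ^ 2 + ‖β‖ ^ 2) * B + 1, by positivity, by positivity, ?_⟩
    intro x
    obtain ⟨ha, hlow, hhigh⟩ := hfr x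
    set a : ℕ → ℝ := fun n => ‖(inner ℂ x (f n) : ℂ)‖ ^ 2 with ha_def
    set u : ℕ → ℝ := fun n => ‖(inner ℂ x (α • f n + β • f (n + 1)) : ℂ)‖ ^ 2 with hu_def
    set v : ℕ → ℝ := fun n => ‖(inner ℂ x (α • f n - β • f (n + 1)) : ℂ)‖ ^ 2 with hv_def
    have ha' : Summable (fun n => a (n + 1)) := (summable_nat_add_iff 1).2 ha
    have hw : Summable (fun n => 2 * (‖α‖ ^ 2 * a n + ‖β‖ ^ 2 * a (n + 1))) := by
      exact ((ha.mul_left _).add (ha'.mul_left _)).mul_left 2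
    have hkey : ∀ n, u n + v n = 2 * (‖α‖ ^ 2 * a n + ‖β‖ ^ 2 * a (n + 1)) :=
      fun n => key x n
    have hu : Summable u :=
      Summable.of_nonneg_of_le (fun n => by positivity)
        (fun n => by
          have := hkey n
          have hv0 : 0 ≤ v n := by positivity
          linarith) hw
    have hv : Summable v :=
      Summable.of_nonneg_of_le (fun n => by positivity)
        (fun n => by
          have := hkey n
          have hu0 : 0 ≤ u n := by positivity
          linarith) hw
    have helim : HasSum (Sum.elim u v) (∑' n, u n + ∑' n, v n) :=
      hasSum_elim' hu.hasSum hv.hasSum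
    have hfun : (fun i => ‖(inner ℂ x ((Sum.elim (fun n : ℕ => α • f n + β • f (n + 1))
        (fun n : ℕ => α • f n - β • f (n + 1))) i) : ℂ)‖ ^ 2) = Sum.elim u v := by
      funext i; cases i <;> rfl
    have htsum_uv : ∑' n, u n + ∑' n, v n =
        2 * ‖α‖ ^ 2 * (∑' n, a n) + 2 * ‖β‖ ^ 2 * (∑' n, a (n + 1)) := by
      rw [← Summable.tsum_add hu hv]
      have : (fun n => u n + v n) =
          fun n => 2 * ‖α‖ ^ 2 * a n + 2 * ‖β‖ ^ 2 * a (n + 1) := by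
        funext n
        have := hkey n
        linarith
      rw [this, Summable.tsum_add (ha.mul_left _) (ha'.mul_left _),
        tsum_mul_left, tsum_mul_left]
    have hS' : ∑' n, a (n + 1) ≤ ∑' n, a n := by
      have h0 : 0 ≤ a 0 := by positivity
      have := Summable.sum_add_tsum_nat_add (f := a) 1 ha
      simp [Finset.sum_range_one] at this
      linarith
    have hS'0 : 0 ≤ ∑' n, a (n + 1) := tsum_nonneg (fun n => by positivity)
    refine ⟨?_, ?_, ?_⟩
    · rw [hfun]; exact helim.summable
    · rw [hfun, helim.tsum_eq, htsum_uv]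
      nlinarith [hα2, sq_nonneg ‖β‖]
    · rw [hfun, helim.tsum_eq, htsum_uv]
      have hSB : ∑' n, a n ≤ B * ‖x‖ ^ 2 := hhigh
      have hS0 : 0 ≤ ‖x‖ ^ 2 := by positivity
      nlinarith [sq_nonneg ‖β‖]
  · rintro ⟨A, B, hA, hB, hfr⟩
    refine ⟨A / (2 * (‖α‖ ^ 2 + ‖β‖ ^ 2)), B / (2 * ‖α‖ ^ 2),
      by positivity, by positivity, ?_⟩
    intro x
    obtain ⟨hsum, hlow, hhigh⟩ := hfr x
    set a : ℕ → ℝ := fun n => ‖(inner ℂ x (f n) : ℂ)‖ ^ 2 with ha_def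
    set u : ℕ → ℝ := fun n => ‖(inner ℂ x (α • f n + β • f (n + 1)) : ℂ)‖ ^ 2 with hu_def
    set v : ℕ → ℝ := fun n => ‖(inner ℂ x (α • f n - β • f (n + 1)) : ℂ)‖ ^ 2 with hv_def
    have hfun : (fun i => ‖(inner ℂ x ((Sum.elim (fun n : ℕ => α • f n + β • f (n + 1))
        (fun n : ℕ => α • f n - β • f (n + 1))) i) : ℂ)‖ ^ 2) = Sum.elim u v := by
      funext i; cases i <;> rfl
    have hkey : ∀ n, u n + v n = 2 * (‖α‖ ^ 2 * a n + ‖β‖ ^ 2 * a (n + 1)) :=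
      fun n => key x n
    rw [hfun] at hsum hlow hhigh
    have hu : Summable u := by
      have := hsum.comp_injective Sum.inl_injective
      simpa [Function.comp] using this
    have hv : Summable v := by
      have := hsum.comp_injective Sum.inr_injective
      simpa [Function.comp] using this
    have hw : Summable (fun n => u n + v n) := hu.add hv
    have ha : Summable a := by
      refine Summable.of_nonneg_of_le (fun n => by positivity)
        (fun n => ?_) (hw.mul_left (1 / (2 * ‖α‖ ^ 2)))
      have hk := hkey n
      have hb0 : 0 ≤ ‖β‖ ^ 2 * a (n + 1) := by positivity
      rw [div_mul_eq_mul_div, one_mul, le_div_iff₀ (by positivity)]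
      nlinarith
    have ha' : Summable (fun n => a (n + 1)) := (summable_nat_add_iff 1).2 ha
    have helim : HasSum (Sum.elim u v) (∑' n, u n + ∑' n, v n) :=
      hasSum_elim' hu.hasSum hv.hasSum
    have htot : ∑' i, Sum.elim u v i = ∑' n, u n + ∑' n, v n := helim.tsum_eq
    have htsum_uv : ∑' n, u n + ∑' n, v n =
        2 * ‖α‖ ^ 2 * (∑' n, a n) + 2 * ‖β‖ ^ 2 * (∑' n, a (n + 1)) := by
      rw [← Summable.tsum_add hu hv]
      have : (fun n => u n + v n) =
          fun n => 2 * ‖α‖ ^ 2 * a n + 2 * ‖β‖ ^ 2 * a (n + 1) := by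
        funext n
        have := hkey n
        linarith
      rw [this, Summable.tsum_add (ha.mul_left _) (ha'.mul_left _),
        tsum_mul_left, tsum_mul_left]
    rw [htot, htsum_uv] at hlow hhigh
    have hS' : ∑' n, a (n + 1) ≤ ∑' n, a n := by
      have h0 : 0 ≤ a 0 := by positivity
      have := Summable.sum_add_tsum_nat_add (f := a) 1 ha
      simp [Finset.sum_range_one] at this
      linarith
    have hS'0 : 0 ≤ ∑' n, a (n + 1) := tsum_nonneg (fun n => by positivity)
    refine ⟨ha, ?_, ?_⟩
    · rw [div_mul_eq_mul_div, div_le_iff₀ (by positivity)]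
      nlinarith [sq_nonneg ‖β‖]
    · rw [div_mul_eq_mul_div, le_div_iff₀ (by positivity)]
      nlinarith [sq_nonneg ‖β‖, hS'0]
end

section
/- Let {f_n}_{n=1}^∞, M = {f_n + f_{n+1}}_{n=1}^∞ and N = {f_n − f_{n+1}}_{n=1}^∞ all be Bessel sequences in a complex Hilbert space H, and suppose the kernel of the synthesis operator T_F of F = {f_n}_{n=1}^∞ is invariant under the right-shift operator on ℓ². Then ker T_F = ker T_M ∩ ker T_N. -/
/-- The kernel of the synthesis operator of a sequence `g`, viewed as the set of
square-summable scalar sequences `c` with `∑ₙ cₙ gₙ = 0`. -/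
def synthKer {H : Type*} [NormedAddCommGroup H] [InnerProductSpace ℂ H]
    (g : ℕ → H) : Set (ℕ → ℂ) :=
  {c | Memℓp c 2 ∧ HasSum (fun n => c n • g n) 0}

/-- The right-shift operator on scalar sequences. -/
def rShift (c : ℕ → ℂ) : ℕ → ℂ
  | 0 => 0
  | n + 1 => c n

theorem stmt4 {H : Type*} [NormedAddCommGroup H] [InnerProductSpace ℂ H]
    [CompleteSpace H] (f : ℕ → H)
    (hF : IsBessel f)
    (hM : IsBessel (fun n => f n + f (n + 1)))
    (hN : IsBessel (fun n => f n - f (n + 1)))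
    (hshift : ∀ c ∈ synthKer f, rShift c ∈ synthKer f) :
    synthKer f =
      synthKer (fun n => f n + f (n + 1)) ∩ synthKer (fun n => f n - f (n + 1)) := by
  ext c
  constructor
  · rintro ⟨hc2, hcs⟩
    obtain ⟨hc2', hcs'⟩ := hshift c ⟨hc2, hcs⟩
    have key : HasSum (fun n => c n • f (n + 1)) 0 := by
      have h : HasSum ((fun n => rShift c n • f n) ∘ Nat.succ) 0 := by
        rw [Function.Injective.hasSum_iff Nat.succ_injective]
        · exact hcs'
        · intro x hx
          have hx0 : x = 0 := by
            rcases x with _ | n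
            · rfl
            · exact absurd ⟨n, rfl⟩ hx
          simp [hx0, rShift]
      exact h
    refine ⟨⟨hc2, ?_⟩, ⟨hc2, ?_⟩⟩
    · simpa [smul_add] using hcs.add key
    · simpa [smul_sub] using hcs.sub key
  · rintro ⟨⟨hc2, hMc⟩, ⟨_, hNc⟩⟩
    refine ⟨hc2, ?_⟩
    have h2 : HasSum (fun n => (2 : ℂ) • (c n • f n)) 0 := by
      simpa [smul_add, smul_sub, two_smul] using hMc.add hNc
    have h3 := h2.const_smul ((2 : ℂ)⁻¹)
    simpa [smul_smul] using h3
end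

section
/- Let {f_n}_{n=1}^∞ be a sequence in a complex Hilbert space H and let T be a linear operator from span{f_n}_{n=1}^∞ to itself. Then {f_n}_{n=1}^∞ is represented by T (i.e., T(f_n + f_{n+1}) = f_{n+2} for all n ≥ 1) if and only if both sequences M = {f_n + f_{n+1}}_{n=1}^∞ and N = {f_n − f_{n+1}}_{n=1}^∞ are represented by T, that is, T(M_n + M_{n+1}) = M_{n+2} and T(N_n + N_{n+1}) = N_{n+2} for all n ≥ 1, where M_n = f_n + f_{n+1} and N_n = f_n − f_{n+1}. -/
theorem stmt8 {H : Type*} [NormedAddCommGroup H] [InnerProductSpace ℂ H]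
    [CompleteSpace H] (f : ℕ → H) (T : H →ₗ[ℂ] H)
    (hinv : ∀ x ∈ Submodule.span ℂ (Set.range f),
      T x ∈ Submodule.span ℂ (Set.range f)) :
    (∀ n : ℕ, T (f n + f (n + 1)) = f (n + 2)) ↔
      ((∀ n : ℕ, T ((f n + f (n + 1)) + (f (n + 1) + f (n + 2))) =
          f (n + 2) + f (n + 3)) ∧
       (∀ n : ℕ, T ((f n - f (n + 1)) + (f (n + 1) - f (n + 2))) =
          f (n + 2) - f (n + 3))) := by
  constructor
  · intro h
    constructor
    · intro n
      rw [map_add, h n, show n + 1 + 1 = n + 2 from rfl,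
        show n + 1 + 2 = n + 3 from rfl] at *
      rw [h (n + 1)]
    · intro n
      have e : (f n - f (n + 1)) + (f (n + 1) - f (n + 2)) =
          (f n + f (n + 1)) - (f (n + 1) + f (n + 2)) := by abel
      rw [e, map_sub, h n, h (n + 1)]
  · rintro ⟨hM, hN⟩ n
    have hsum : T (((f n + f (n + 1)) + (f (n + 1) + f (n + 2))) +
        ((f n - f (n + 1)) + (f (n + 1) - f (n + 2)))) =
        (f (n + 2) + f (n + 3)) + (f (n + 2) - f (n + 3)) := by
      rw [map_add, hM n, hN n]
    have e : ((f n + f (n + 1)) + (f (n + 1) + f (n + 2))) +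
        ((f n - f (n + 1)) + (f (n + 1) - f (n + 2))) =
        (2 : ℂ) • (f n + f (n + 1)) := by
      rw [two_smul]; abel
    have e2 : (f (n + 2) + f (n + 3)) + (f (n + 2) - f (n + 3)) =
        (2 : ℂ) • f (n + 2) := by
      rw [two_smul]; abel
    rw [e, e2, map_smul] at hsum
    exact smul_right_injective H (by norm_num) hsum
end

section
/- Let {f_n}_{n=1}^∞ be a sequence in a complex Hilbert space H represented by a linear operator T : span{f_n}_{n=1}^∞ → span{f_n}_{n=1}^∞ (so that T(f_n + f_{n+1}) = f_{n+2} for all n ≥ 1). Suppose for some integer m ≥ 2 we have f_m ∈ span{f_1, …, f_{m−1}} and f_{m+1} ∉ span{f_1, …, f_{m−1}}. Then T f_i ∈ span{f_3, f_4, …, f_{m+1}} for every 1 ≤ i ≤ m. -/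
/- Here `f : ℕ → H` is 0-indexed: `f 0, f 1, …` correspond to `f_1, f_2, …`.
With `k = m - 1` (so the paper's `m ≥ 2` becomes `k ≥ 1`), the hypotheses
`f_m ∈ span{f_1,…,f_{m-1}}` and `f_{m+1} ∉ span{f_1,…,f_{m-1}}` become the ones
below, and the conclusion `T f_i ∈ span{f_3,…,f_{m+1}}` for `1 ≤ i ≤ m` becomes
`T (f i) ∈ span{f 2, …, f (k+1)}` for `i ≤ k`. -/
theorem stmt13 {H : Type*} [NormedAddCommGroup H] [InnerProductSpace ℂ H]
    [CompleteSpace H] (f : ℕ → H) (T : H →ₗ[ℂ] H)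
    (hinv : ∀ x ∈ Submodule.span ℂ (Set.range f),
      T x ∈ Submodule.span ℂ (Set.range f))
    (hrep : ∀ n : ℕ, T (f n + f (n + 1)) = f (n + 2))
    (k : ℕ) (hk : 1 ≤ k)
    (hmem : f k ∈ Submodule.span ℂ (Set.range (fun i : Fin k => f i)))
    (hnmem : f (k + 1) ∉ Submodule.span ℂ (Set.range (fun i : Fin k => f i))) :
    ∀ i : ℕ, i ≤ k →
      T (f i) ∈ Submodule.span ℂ (Set.range (fun j : Fin k => f (j + 2))) := by
  set S : Submodule ℂ H := Submodule.span ℂ (Set.range (fun j : Fin k => f (j + 2))) with hSdef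
  set W : Submodule ℂ H := Submodule.span ℂ (Set.range (fun i : Fin k => f i)) with hWdef
  have hrec : ∀ n : ℕ, T (f (n + 1)) = f (n + 2) - T (f n) := by
    intro n
    have := hrep n
    rw [map_add] at this
    linear_combination (norm := module) this
  have hfS : ∀ j : ℕ, 2 ≤ j → j ≤ k + 1 → f j ∈ S := by
    intro j h2 hk1
    apply Submodule.subset_span
    exact ⟨⟨j - 2, by omega⟩, by simp only; congr 1; omega⟩
  have hfW : ∀ j : ℕ, j < k → f j ∈ W := by
    intro j hj
    exact Submodule.subset_span ⟨⟨j, hj⟩, rfl⟩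
  set S' : Submodule ℂ H := Submodule.span ℂ (f '' Set.Ico 2 (k + 1)) with hS'def
  have hfS' : ∀ j : ℕ, 2 ≤ j → j ≤ k → f j ∈ S' := by
    intro j h2 hjk
    exact Submodule.subset_span ⟨j, ⟨h2, by omega⟩, rfl⟩
  have hS'S : S' ≤ S := by
    rw [hS'def, Submodule.span_le]
    rintro x ⟨j, ⟨h2, hjk⟩, rfl⟩
    exact hfS j h2 (by omega)
  have hS'W : S' ≤ W := by
    rw [hS'def, Submodule.span_le]
    rintro x ⟨j, ⟨h2, hjk⟩, rfl⟩
    rcases eq_or_lt_of_le (Nat.lt_succ_iff.mp hjk) with h | h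
    · exact h ▸ hmem
    · exact hfW j h
  -- Lemma A : T f i ≡ (-1)^i • T f 0 mod S' for i + 1 ≤ k
  have hA : ∀ i : ℕ, i + 1 ≤ k → T (f i) - (-1 : ℂ) ^ i • T (f 0) ∈ S' := by
    intro i
    induction i with
    | zero => intro _; simp
    | succ n ih =>
      intro hn
      have h1 : T (f (n + 1)) - (-1 : ℂ) ^ (n + 1) • T (f 0)
          = f (n + 2) - (T (f n) - (-1 : ℂ) ^ n • T (f 0)) := by
        rw [hrec n]; ring_nf; module
      rw [h1]
      exact sub_mem (hfS' (n + 2) (by omega) (by omega)) (ih (by omega))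
  set U : Submodule ℂ H := S' ⊔ (ℂ ∙ T (f 0)) with hUdef
  have hTU : ∀ i : ℕ, i + 1 ≤ k → T (f i) ∈ U := by
    intro i hi
    have : T (f i) = (T (f i) - (-1 : ℂ) ^ i • T (f 0)) + (-1 : ℂ) ^ i • T (f 0) := by module
    rw [this]
    exact add_mem (Submodule.mem_sup_left (hA i hi))
      (Submodule.mem_sup_right (Submodule.smul_mem _ _ (Submodule.mem_span_singleton_self _)))
  have hTk : T (f k) ∈ U := by
    refine Submodule.span_induction ?_ ?_ ?_ ?_ hmem
    · rintro x ⟨i, rfl⟩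
      exact hTU i (by omega)
    · simp
    · intro x y _ _ hx hy; rw [map_add]; exact add_mem hx hy
    · intro c x _ hx; rw [map_smul]; exact Submodule.smul_mem _ _ hx
  have hfk1U : f (k + 1) ∈ U := by
    have h1 : f (k + 1) = T (f (k - 1)) + T (f k) := by
      have := hrep (k - 1)
      rw [map_add] at this
      have e1 : k - 1 + 1 = k := by omega
      have e2 : k - 1 + 2 = k + 1 := by omega
      rw [e1, e2] at this
      exact this.symm
    rw [h1]
    exact add_mem (hTU (k - 1) (by omega)) hTk
  rw [hUdef, Submodule.mem_sup] at hfk1U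
  obtain ⟨s, hs, y, hy, hsy⟩ := hfk1U
  rw [Submodule.mem_span_singleton] at hy
  obtain ⟨c, rfl⟩ := hy
  have hT0S : T (f 0) ∈ S := by
    rcases eq_or_ne c 0 with hc | hc
    · exfalso
      apply hnmem
      rw [← hsy, hc, zero_smul, add_zero]
      exact hS'W hs
    · have : T (f 0) = c⁻¹ • (f (k + 1) - s) := by
        rw [← hsy, add_sub_cancel_left, smul_smul, inv_mul_cancel₀ hc, one_smul]
      rw [this]
      exact Submodule.smul_mem _ _ (sub_mem (hfS (k + 1) (by omega) le_rfl) (hS'S hs))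
  intro i
  induction i with
  | zero => intro _; exact hT0S
  | succ n ih =>
    intro hn
    rw [hrec n]
    exact sub_mem (hfS (n + 2) (by omega) (by omega)) (ih (by omega))
end

section
/- Let {f_n}_{n=1}^∞ be a complete, linearly dependent sequence in an infinite-dimensional complex Hilbert space H. Then for every Fibonacci representation operator T of {f_n}_{n=1}^∞ (i.e., every linear operator T : span{f_n}_{n=1}^∞ → span{f_n}_{n=1}^∞ with T(f_n + f_{n+1}) = f_{n+2} for all n ≥ 1), the range of T equals span{f_n}_{n=3}^∞. -/
open Finset Submodule

private def stmt14.shift2 (e : ℕ → ℂ) : ℕ → ℂ := fun m =>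
  match m with
  | 0 => 0
  | 1 => 0
  | (k+2) => e k

private lemma stmt14.shift2_sum {H : Type*} [AddCommMonoid H] [Module ℂ H]
    (f : ℕ → H) (e : ℕ → ℂ) (K : ℕ) :
    ∑ n ∈ Finset.range (K+2), stmt14.shift2 e n • f n
      = ∑ k ∈ Finset.range K, e k • f (k+2) := by
  induction K with
  | zero => simp [Finset.sum_range_succ, stmt14.shift2]
  | succ K ih =>
    show ∑ n ∈ Finset.range ((K+2)+1), stmt14.shift2 e n • f n = _
    rw [Finset.sum_range_succ, ih, Finset.sum_range_succ (fun k => e k • f (k+2)) K]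
    rfl

theorem stmt14 {H : Type*} [NormedAddCommGroup H] [InnerProductSpace ℂ H]
    [CompleteSpace H] (hdim : ¬ FiniteDimensional ℂ H) (f : ℕ → H)
    (hcomplete : Dense (↑(Submodule.span ℂ (Set.range f)) : Set H))
    (hdep : ¬ LinearIndependent ℂ f) :
    ∀ T : H →ₗ[ℂ] H,
      (∀ x ∈ Submodule.span ℂ (Set.range f),
        T x ∈ Submodule.span ℂ (Set.range f)) →
      (∀ n : ℕ, T (f n + f (n + 1)) = f (n + 2)) →
      Submodule.map T (Submodule.span ℂ (Set.range f)) =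
        Submodule.span ℂ (Set.range (fun n => f (n + 2))) := by
  intro T _hTspan hTfib
  set V := Submodule.span ℂ (Set.range (fun n => f (n + 2))) with hVdef
  have hadd : ∀ n, T (f n) + T (f (n+1)) = f (n+2) := by
    intro n; rw [← map_add]; exact hTfib n
  have hmemV : ∀ n, f (n+2) ∈ V := fun n => subset_span (Set.mem_range_self n)
  -- Lemma B
  have hB : ∀ n, T (f n) - ((-1:ℂ)^n) • T (f 0) ∈ V := by
    intro n
    induction n with
    | zero => simp
    | succ n ih =>
      have h1 : T (f (n+1)) - (-1:ℂ)^(n+1) • T (f 0)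
          = f (n+2) - (T (f n) - (-1:ℂ)^n • T (f 0)) := by
        rw [← hadd n, pow_succ]
        module
      rw [h1]
      exact V.sub_mem (hmemV n) ih
  -- Main lemma : T (f 0) ∈ V
  have hC : T (f 0) ∈ V := by
    by_contra h0
    -- every relation has zero alternating sum
    have hD : ∀ (N : ℕ) (c : ℕ → ℂ),
        (∑ n ∈ range N, c n • f n = 0) →
        ∑ n ∈ range N, (-1:ℂ)^n * c n = 0 := by
      intro N c hrel
      by_contra hα
      have h1 : ∑ n ∈ range N, c n • T (f n) = 0 := by
        have := congrArg T hrel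
        simpa [map_sum, map_smul] using this
      have h2 : ∑ n ∈ range N, c n • (T (f n) - (-1:ℂ)^n • T (f 0))
          = - ∑ n ∈ range N, ((-1:ℂ)^n * c n) • T (f 0) := by
        calc ∑ n ∈ range N, c n • (T (f n) - (-1:ℂ)^n • T (f 0))
            = ∑ n ∈ range N, (c n • T (f n) - ((-1:ℂ)^n * c n) • T (f 0)) :=
              Finset.sum_congr rfl fun n _ => by rw [smul_sub, smul_smul, mul_comm]
          _ = ∑ n ∈ range N, c n • T (f n)
                - ∑ n ∈ range N, ((-1:ℂ)^n * c n) • T (f 0) := Finset.sum_sub_distrib _ _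
          _ = - ∑ n ∈ range N, ((-1:ℂ)^n * c n) • T (f 0) := by rw [h1, zero_sub]
      have hsum : ∑ n ∈ range N, c n • (T (f n) - (-1:ℂ)^n • T (f 0)) ∈ V :=
        V.sum_mem fun n _ => V.smul_mem _ (hB n)
      have hmem : (∑ n ∈ range N, (-1:ℂ)^n * c n) • T (f 0) ∈ V := by
        rw [Finset.sum_smul, ← neg_neg (∑ n ∈ range N, ((-1:ℂ)^n * c n) • T (f 0)), ← h2]
        exact V.neg_mem hsum
      refine h0 ?_
      have := V.smul_mem (∑ n ∈ range N, (-1:ℂ)^n * c n)⁻¹ hmem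
      rwa [smul_smul, inv_mul_cancel₀ hα, one_smul] at this
    -- step: a relation with top index N yields one with top index N+1
    have hstep : ∀ (N : ℕ) (c : ℕ → ℂ), c N ≠ 0 →
        (∑ n ∈ range (N+1), c n • f n = 0) →
        ∃ c' : ℕ → ℂ, c' (N+1) ≠ 0 ∧ ∑ n ∈ range (N+2), c' n • f n = 0 := by
      intro N c hcN hrel
      have halt : ∑ n ∈ range (N+1), (-1:ℂ)^n * c n = 0 := hD _ _ hrel
      match N, hcN, hrel, halt with
      | 0, hcN, hrel, halt =>
        exfalso
        simp at halt
        exact hcN halt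
      | (M+1), hcN, hrel, halt =>
        set d : ℕ → ℂ := fun n => (-1:ℂ)^n * ∑ k ∈ range (n+1), (-1:ℂ)^k * c k with hd
        have hdrec : ∀ m, d (m+1) + d m = c (m+1) := by
          intro m
          have hsq : (-1:ℂ)^m * (-1:ℂ)^m = 1 := by
            rw [← pow_add]; exact Even.neg_one_pow ⟨m, rfl⟩
          simp only [hd, sum_range_succ]
          linear_combination (c (m+1)) * hsq
        have hd0 : d 0 = c 0 := by simp [hd]
        -- telescoping identity
        have htel : ∀ m, ∑ n ∈ range (m+1), d n • (f n + f (n+1))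
            = (∑ n ∈ range (m+1), c n • f n) + d m • f (m+1) := by
          intro m
          induction m with
          | zero => simp [hd0, smul_add]
          | succ m ih =>
            have key : c (m+1) • f (m+1) = d (m+1) • f (m+1) + d m • f (m+1) := by
              rw [← hdrec m, add_smul]
            rw [sum_range_succ, ih, sum_range_succ (fun n => c n • f n) (m+1), key, smul_add]
            abel
        -- top coefficient of d vanishes
        have hdtop : d (M+1) = 0 := by
          simp only [hd]
          rw [halt, mul_zero]
        -- so we get a relation among the (f n + f (n+1)), apply T
        have hrel2 : ∑ n ∈ range (M+2), d n • (f n + f (n+1)) = 0 := by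
          rw [htel (M+1), hrel, hdtop, zero_smul, add_zero]
        have hrel3 : ∑ n ∈ range (M+2), d n • f (n+2) = 0 := by
          have := congrArg T hrel2
          simp only [map_sum, map_smul, map_zero] at this
          simpa only [hTfib] using this
        -- d M = c (M+1) ≠ 0
        have hdM : d M = c (M+1) := by
          have := hdrec M
          rw [hdtop, zero_add] at this
          exact this
        -- reindex
        refine ⟨stmt14.shift2 d, ?_, ?_⟩
        · show d M ≠ 0
          rw [hdM]; exact hcN
        · show ∑ n ∈ range ((M+1)+2), stmt14.shift2 d n • f n = 0
          rw [stmt14.shift2_sum f d (M+1)]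
          calc ∑ k ∈ range (M+1), d k • f (k+2)
              = ∑ k ∈ range (M+1), d k • f (k+2) + d (M+1) • f (M+1+2) := by
                rw [hdtop, zero_smul, add_zero]
            _ = ∑ k ∈ range (M+1+1), d k • f (k+2) :=
                (sum_range_succ (fun k => d k • f (k+2)) (M+1)).symm
            _ = 0 := hrel3
    -- initial relation from linear dependence
    obtain ⟨N0, c0, hc0, hrel0⟩ :
        ∃ (N0 : ℕ) (c : ℕ → ℂ), c N0 ≠ 0 ∧ ∑ n ∈ range (N0+1), c n • f n = 0 := by
      rw [linearIndependent_iff] at hdep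
      push_neg at hdep
      obtain ⟨l, hl0, hlne⟩ := hdep
      have hsupp : l.support.Nonempty := Finsupp.support_nonempty_iff.2 hlne
      refine ⟨l.support.max' hsupp, l, ?_, ?_⟩
      · exact Finsupp.mem_support_iff.1 (l.support.max'_mem hsupp)
      · rw [Finsupp.linearCombination_apply, Finsupp.sum] at hl0
        rw [← hl0]
        refine (Finset.sum_subset ?_ ?_).symm
        · intro a ha
          rw [Finset.mem_range, Nat.lt_succ_iff]
          exact l.support.le_max' a ha
        · intro a _ ha
          rw [Finsupp.notMem_support_iff.1 ha, zero_smul]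
    -- propagate: relations at every level ≥ N0
    have hrelall : ∀ m, N0 ≤ m →
        ∃ c : ℕ → ℂ, c m ≠ 0 ∧ ∑ n ∈ range (m+1), c n • f n = 0 := by
      intro m hm
      induction m, hm using Nat.le_induction with
      | base => exact ⟨c0, hc0, hrel0⟩
      | succ m _ ih =>
        obtain ⟨c, hc, hrel⟩ := ih
        exact hstep m c hc hrel
    -- span of f is finite dimensional
    set W := Submodule.span ℂ (f '' Set.Iio N0) with hWdef
    have hfW : ∀ m, f m ∈ W := by
      intro m
      induction m using Nat.strong_induction_on with
      | _ m ih =>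
        by_cases hm : m < N0
        · exact subset_span ⟨m, hm, rfl⟩
        · push_neg at hm
          obtain ⟨c, hc, hrel⟩ := hrelall m hm
          rw [sum_range_succ] at hrel
          have hfm : f m = (c m)⁻¹ • (- ∑ n ∈ range m, c n • f n) := by
            have : c m • f m = - ∑ n ∈ range m, c n • f n := by
              rw [eq_neg_iff_add_eq_zero, add_comm]; exact hrel
            rw [← this, smul_smul, inv_mul_cancel₀ hc, one_smul]
          rw [hfm]
          exact W.smul_mem _ (W.neg_mem (W.sum_mem fun n hn =>
            W.smul_mem _ (ih n (Finset.mem_range.1 hn))))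
    have hle : Submodule.span ℂ (Set.range f) ≤ W := by
      rw [span_le]
      rintro _ ⟨m, rfl⟩
      exact hfW m
    haveI : FiniteDimensional ℂ W := by
      apply FiniteDimensional.span_of_finite
      exact Set.Finite.image f (Set.finite_Iio N0)
    have hclosed : IsClosed (W : Set H) := Submodule.closed_of_finiteDimensional W
    have hWtop : W = ⊤ := by
      rw [Submodule.eq_top_iff']
      intro x
      have h1 : closure (Submodule.span ℂ (Set.range f) : Set H) ⊆ (W : Set H) := by
        rw [← hclosed.closure_eq]
        exact closure_mono hle
      have := hcomplete.closure_eq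
      rw [this] at h1
      exact h1 (Set.mem_univ x)
    exact hdim (Module.Finite.equiv (LinearEquiv.ofTop W hWtop))
  -- final assembly
  have hTn : ∀ n, T (f n) ∈ V := by
    intro n
    induction n with
    | zero => exact hC
    | succ n ih =>
      have h1 : T (f (n+1)) = f (n+2) - T (f n) := by
        rw [← hadd n]; abel
      rw [h1]
      exact V.sub_mem (hmemV n) ih
  rw [Submodule.map_span]
  refine le_antisymm ?_ ?_
  · rw [span_le]
    rintro _ ⟨_, ⟨n, rfl⟩, rfl⟩
    exact hTn n
  · rw [span_le]
    rintro _ ⟨n, rfl⟩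
    show f (n+2) ∈ Submodule.span ℂ (T '' Set.range f)
    rw [← hadd n]
    exact add_mem (subset_span ⟨f n, ⟨n, rfl⟩, rfl⟩)
      (subset_span ⟨f (n+1), ⟨n+1, rfl⟩, rfl⟩)
end

section
/- Let {f_n}_{n=1}^∞ be a complete sequence in an infinite-dimensional complex Hilbert space H that is represented by a linear operator T : span{f_n}_{n=1}^∞ → span{f_n}_{n=1}^∞ (so that T(f_n + f_{n+1}) = f_{n+2} for all n ≥ 1). Then there exists m ∈ ℕ such that the sequence {f_{m+n} + f_{m+n+1}}_{n=1}^∞ is linearly independent. -/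
theorem stmt15 {H : Type*} [NormedAddCommGroup H] [InnerProductSpace ℂ H]
    [CompleteSpace H] (hdim : ¬ FiniteDimensional ℂ H) (f : ℕ → H)
    (hcomplete : Dense (↑(Submodule.span ℂ (Set.range f)) : Set H))
    (T : H →ₗ[ℂ] H)
    (hinv : ∀ x ∈ Submodule.span ℂ (Set.range f),
      T x ∈ Submodule.span ℂ (Set.range f))
    (hrep : ∀ n : ℕ, T (f n + f (n + 1)) = f (n + 2)) :
    ∃ m : ℕ, 1 ≤ m ∧
      LinearIndependent ℂ (fun n : ℕ => f (m + n) + f (m + n + 1)) := by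
  by_contra hcon
  push_neg at hcon
  set h0 : H := T (f 0) with hh0
  have hTT : ∀ n, T (f n) + T (f (n+1)) = f (n+2) := by
    intro n; rw [← map_add]; exact hrep n
  have hmem : h0 ∈ Submodule.span ℂ (Set.range f) :=
    hinv _ (Submodule.subset_span ⟨0, rfl⟩)
  obtain ⟨c0, hc0⟩ := Finsupp.mem_span_range_iff_exists_finsupp.mp hmem
  set K := c0.support.sup id with hKdef
  set U : ℕ → Submodule ℂ H := fun t => Submodule.span ℂ (f '' Set.Iic t) with hUdef
  have hUf : ∀ i t, i ≤ t → f i ∈ U t := fun i t h => Submodule.subset_span ⟨i, h, rfl⟩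
  have hUmono : ∀ s t, s ≤ t → U s ≤ U t := fun s t h =>
    Submodule.span_mono (Set.image_mono (Set.Iic_subset_Iic.mpr h))
  have hh0K : h0 ∈ U K := by
    rw [← hc0, Finsupp.sum]
    exact Submodule.sum_mem _ fun i hi =>
      Submodule.smul_mem _ _ (hUf i K (Finset.le_sup (f := id) hi))
  set W : ℕ → Submodule ℂ H := fun t => U t ⊔ (ℂ ∙ h0) with hWdef
  have hWmono : ∀ s t, s ≤ t → W s ≤ W t := fun s t h => sup_le_sup_right (hUmono s t h) _
  have hTf : ∀ n, T (f n) ∈ W (n+1) := by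
    intro n
    induction n with
    | zero =>
        exact (le_sup_right : (ℂ ∙ h0) ≤ W 1) (Submodule.mem_span_singleton_self h0)
    | succ n ih =>
        have heq : T (f (n+1)) = f (n+2) - T (f n) := by
          rw [eq_sub_iff_add_eq, add_comm]; exact hTT n
        rw [heq]
        exact Submodule.sub_mem _
          ((le_sup_left : U (n+2) ≤ W (n+2)) (hUf _ _ le_rfl))
          (hWmono _ _ (by omega) ih)
  have hTU : ∀ t, ∀ x ∈ U t, T x ∈ W (t+1) := by
    intro t
    have : U t ≤ (W (t+1)).comap T := by
      rw [hUdef]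
      rw [Submodule.span_le]
      rintro x ⟨i, hi, rfl⟩
      exact hWmono _ _ (by simpa using hi) (hTf i)
    exact fun x hx => this hx
  have hstep : ∀ t, K ≤ t → f (t+1) ∈ U t → f (t+2) ∈ U (t+1) := by
    intro t hKt hmem'
    have h1 : T (f (t+1)) ∈ W (t+1) := hTU t _ hmem'
    have h2 : T (f t) ∈ W (t+1) := hTf t
    have h3 : f (t+2) ∈ W (t+1) := by rw [← hTT t]; exact Submodule.add_mem _ h2 h1
    have hWU : W (t+1) ≤ U (t+1) :=
      sup_le le_rfl ((Submodule.span_singleton_le_iff_mem _ _).mpr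
        (hUmono K (t+1) (by omega) hh0K))
    exact hWU h3
  -- extract a dependence relation from the tail at m = K+1
  have hdep := hcon (K+1) (by omega)
  rw [linearIndependent_iff'] at hdep
  push_neg at hdep
  obtain ⟨s, c, hsum, i0, hi0s, hi0⟩ := hdep
  have hsum2 : ∑ i ∈ s, c i • f (K+1+i+2) = 0 := by
    have h := congrArg T hsum
    rw [map_sum, map_zero] at h
    rw [← h]
    refine Finset.sum_congr rfl fun i _ => ?_
    rw [map_smul, hrep (K+1+i)]
  set s' : Finset ℕ := s.filter (fun i => c i ≠ 0) with hs'def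
  have hi0s' : i0 ∈ s' := Finset.mem_filter.mpr ⟨hi0s, hi0⟩
  have hs'ne : s'.Nonempty := ⟨i0, hi0s'⟩
  set b := s'.max' hs'ne with hbdef
  have hbs' : b ∈ s' := s'.max'_mem hs'ne
  have hcb : c b ≠ 0 := (Finset.mem_filter.mp hbs').2
  have hsum3 : ∑ i ∈ s', c i • f (K+1+i+2) = 0 := by
    rw [← hsum2]
    refine Finset.sum_subset (Finset.filter_subset _ _) fun x hx hx' => ?_
    have : c x = 0 := by
      by_contra hc
      exact hx' (Finset.mem_filter.mpr ⟨hx, hc⟩)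
    rw [this, zero_smul]
  have hbase : f (K+1+b+2) ∈ U (K+2+b) := by
    have h4 : c b • f (K+1+b+2) + ∑ i ∈ s'.erase b, c i • f (K+1+i+2) = 0 :=
      (Finset.add_sum_erase s' (fun i => c i • f (K+1+i+2)) hbs').trans hsum3
    have h5 : f (K+1+b+2) = (c b)⁻¹ • (-(∑ i ∈ s'.erase b, c i • f (K+1+i+2))) := by
      have : c b • f (K+1+b+2) = -(∑ i ∈ s'.erase b, c i • f (K+1+i+2)) :=
        eq_neg_of_add_eq_zero_left h4
      rw [← this, smul_smul, inv_mul_cancel₀ hcb, one_smul]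
    rw [h5]
    refine Submodule.smul_mem _ _ (Submodule.neg_mem _ (Submodule.sum_mem _ fun i hi => ?_))
    have hib : i < b := by
      have h6 := Finset.mem_erase.mp hi
      exact lt_of_le_of_ne (s'.le_max' i h6.2) h6.1
    exact Submodule.smul_mem _ _ (hUf _ _ (by omega))
  set t0 := K + 2 + b with ht0def
  have hbase' : f (t0 + 1) ∈ U t0 := by
    have : K+1+b+2 = t0 + 1 := by omega
    rwa [this] at hbase
  have hall : ∀ n, U (t0 + n) ≤ U t0 ∧ f (t0 + n + 1) ∈ U t0 := by
    intro n
    induction n with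
    | zero => exact ⟨le_rfl, hbase'⟩
    | succ n ih =>
        have hU1 : U (t0 + n + 1) ≤ U t0 := by
          rw [hUdef, Submodule.span_le]
          rintro x ⟨i, hi, rfl⟩
          simp only [Set.mem_Iic] at hi
          rcases Nat.lt_or_ge i (t0 + n + 1) with h | h
          · exact ih.1 (hUf i (t0+n) (by omega))
          · have : i = t0 + n + 1 := by omega
            rw [this]; exact ih.2
        refine ⟨hU1, ?_⟩
        have h7 : f (t0 + n + 1) ∈ U (t0 + n) := hUmono t0 (t0+n) (by omega) ih.2
        have h8 : f (t0 + n + 2) ∈ U (t0 + n + 1) := hstep (t0 + n) (by omega) h7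
        exact hU1 h8
  have hallf : ∀ n, f n ∈ U t0 := by
    intro n
    rcases le_or_gt n t0 with h | h
    · exact hUf n t0 h
    · obtain ⟨k, hk⟩ : ∃ k, n = t0 + k + 1 := ⟨n - t0 - 1, by omega⟩
      rw [hk]; exact (hall k).2
  have hspan : Submodule.span ℂ (Set.range f) ≤ U t0 := by
    rw [Submodule.span_le]
    rintro x ⟨n, rfl⟩
    exact hallf n
  have hfd : FiniteDimensional ℂ (U t0) :=
    FiniteDimensional.span_of_finite ℂ ((Set.finite_Iic t0).image f)
  have hcl : IsClosed ((U t0 : Submodule ℂ H) : Set H) :=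
    Submodule.closed_of_finiteDimensional _
  have hsub : closure ((Submodule.span ℂ (Set.range f) : Submodule ℂ H) : Set H)
      ⊆ (U t0 : Set H) := closure_minimal hspan hcl
  have htop : U t0 = ⊤ := by
    rw [Submodule.eq_top_iff']
    intro x
    exact hsub (by rw [hcomplete.closure_eq]; trivial)
  have hfdtop : FiniteDimensional ℂ (⊤ : Submodule ℂ H) := htop ▸ hfd
  exact hdim (Submodule.topEquiv.finiteDimensional)
end

section
/- Let {f_n}_{n=1}^∞ be a sequence in a complex Hilbert space H and T : span{f_n}_{n=1}^∞ → span{f_n}_{n=1}^∞ a linear operator. Then the following are equivalent: (i) T(f_n + f_{n+1}) = f_{n+2} for all n ≥ 1; (ii) T f_1 + T f_2 = f_3 and for all n ≥ 4, f_n = Σ_{i=a_n}^{2a_n} [ C(i + b_n, 2i − 2a_n + b_n) T^{i+b_n} f_2 + C(i + b_n, 2i − 2a_n + b_n + 1) T^{i+b_n+1} f_1 ], where a_n = ⌊(n−1)/2⌋, b_n = n − 2a_n − 2, and C(n, k) denotes the binomial coefficient (with C(n, k) = 0 when k > n or k < 0). -/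
/-- Binomial coefficient `C(n, k)` for integers, with the convention that it
vanishes when `k < 0` or `k > n`. -/
def zbinom (n k : ℤ) : ℕ :=
  if 0 ≤ k ∧ k ≤ n then n.toNat.choose k.toNat else 0

lemma zbinom_eq_zero {n k : ℤ} (h : ¬ (0 ≤ k ∧ k ≤ n)) : zbinom n k = 0 := if_neg h

lemma zbinom_pascal (n k : ℤ) (hn : 1 ≤ n) :
    zbinom n k = zbinom (n - 1) (k - 1) + zbinom (n - 1) k := by
  unfold zbinom
  rcases lt_or_ge k 0 with hk | hk
  · rw [if_neg (by omega), if_neg (by omega), if_neg (by omega)]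
  rcases eq_or_lt_of_le hk with hk0 | hk1
  · rw [if_pos (by omega), if_neg (by omega), if_pos (by omega)]
    have h1 : k.toNat = 0 := by omega
    simp [h1]
  · rcases le_or_gt k n with hkn | hkn
    · rw [if_pos ⟨hk, hkn⟩]
      obtain ⟨m, hm⟩ : ∃ m : ℕ, n.toNat = m + 1 := ⟨(n - 1).toNat, by omega⟩
      obtain ⟨t, ht⟩ : ∃ t : ℕ, k.toNat = t + 1 := ⟨(k - 1).toNat, by omega⟩
      have hm' : (n - 1).toNat = m := by omega
      have ht' : (k - 1).toNat = t := by omega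
      rw [hm, ht, Nat.choose_succ_succ']
      rcases le_or_gt k (n - 1) with h2 | h2
      · rw [if_pos (by omega), if_pos (by omega), hm', ht']
      · rw [if_pos (by omega), if_neg (by omega), hm']
        have hlt : m < t + 1 := by omega
        rw [Nat.choose_eq_zero_of_lt hlt, ht']
    · rw [if_neg (by omega), if_neg (by omega), if_neg (by omega)]

/-- coefficient of `T^j y` (= `T^j f₂` in paper numbering) in `f k`. -/
def c1 (k j : ℕ) : ℕ := zbinom (j : ℤ) (2 * (j : ℤ) - (k : ℤ) + 1)

/-- coefficient of `T^j x` (= `T^j f₁`) in `f k`. -/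
def c0 (k j : ℕ) : ℕ := zbinom ((j : ℤ) - 1) (2 * (j : ℤ) - (k : ℤ))

lemma c1_eq_zero {k j : ℕ} (h : 2 * j + 1 < k ∨ k ≤ j) : c1 k j = 0 := by
  apply zbinom_eq_zero; omega

lemma c0_eq_zero {k j : ℕ} (h : 2 * j < k ∨ k ≤ j) : c0 k j = 0 := by
  apply zbinom_eq_zero; omega

lemma pascal_c1 (k j : ℕ) : c1 (k + 2) (j + 1) = c1 (k + 1) j + c1 k j := by
  unfold c1
  rw [show ((j : ℕ) + 1 : ℕ) = j + 1 from rfl]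
  push_cast
  rw [zbinom_pascal ((j : ℤ) + 1) _ (by omega)]
  congr 1 <;> congr 1 <;> ring

lemma pascal_c0 (k j : ℕ) (hk : 1 ≤ k) : c0 (k + 2) (j + 1) = c0 (k + 1) j + c0 k j := by
  rcases Nat.eq_zero_or_pos j with hj | hj
  · subst hj
    rw [c0_eq_zero (k := k + 2) (j := 1) (by omega),
        c0_eq_zero (by omega), c0_eq_zero (by omega)]
  · unfold c0
    push_cast
    have h1 : ((j : ℤ) + 1 - 1) = ((j : ℤ) - 1) + 1 := by ring
    rw [h1, zbinom_pascal ((j : ℤ) - 1 + 1) _ (by omega)]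
    congr 1 <;> congr 1 <;> ring

section Hilbert

variable {H : Type*} [AddCommGroup H] [Module ℂ H]

lemma sum_shift_up (g : ℕ → H) (p q : ℕ) :
    (∑ i ∈ Finset.Icc p q, g (i + 1)) = ∑ j ∈ Finset.Icc (p + 1) (q + 1), g j := by
  rw [← Finset.map_add_right_Icc, Finset.sum_map]
  simp [addRightEmbedding]

lemma sum_shift_down (g : ℕ → H) (p q : ℕ) :
    (∑ i ∈ Finset.Icc (p + 1) (q + 1), g (i - 1)) = ∑ j ∈ Finset.Icc p q, g j := by
  rw [← Finset.map_add_right_Icc, Finset.sum_map]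
  simp [addRightEmbedding]

/-- The canonical closed-form expansion of `f k` in terms of `T^j (f 1)` and `T^j (f 0)`. -/
noncomputable def S (T : H →ₗ[ℂ] H) (x y : H) (k : ℕ) : H :=
  ∑ j ∈ Finset.range (k + 1),
    ((c1 k j : ℂ) • (T ^ j) y + (c0 k j : ℂ) • (T ^ j) x)

lemma S_one (T : H →ₗ[ℂ] H) (x y : H) : S T x y 1 = y := by
  unfold S
  rw [Finset.sum_range_succ, Finset.sum_range_one]
  norm_num [c1, c0, zbinom]

lemma S_two (T : H →ₗ[ℂ] H) (x y : H) : S T x y 2 = T y + T x := by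
  unfold S
  rw [Finset.sum_range_succ, Finset.sum_range_succ, Finset.sum_range_one]
  norm_num [c1, c0, zbinom, pow_one]

lemma S_step (T : H →ₗ[ℂ] H) (x y : H) (k : ℕ) (hk : 1 ≤ k) :
    T (S T x y k + S T x y (k + 1)) = S T x y (k + 2) := by
  have hT : ∀ (j : ℕ) (v : H), T ((T ^ j) v) = (T ^ (j + 1)) v := by
    intro j v
    rw [pow_succ']
    rfl
  rw [map_add]
  unfold S
  rw [map_sum, map_sum]
  simp only [map_add, map_smul, hT]
  have ext1 : (∑ j ∈ Finset.range (k + 1),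
        ((c1 k j : ℂ) • (T ^ (j + 1)) y + (c0 k j : ℂ) • (T ^ (j + 1)) x))
      = ∑ j ∈ Finset.range (k + 2),
        ((c1 k j : ℂ) • (T ^ (j + 1)) y + (c0 k j : ℂ) • (T ^ (j + 1)) x) := by
    rw [Finset.sum_range_succ (n := k + 1)]
    rw [c1_eq_zero (k := k) (j := k + 1) (by omega), c0_eq_zero (k := k) (j := k + 1) (by omega)]
    simp
  rw [ext1]
  rw [show k + 2 + 1 = (k + 2) + 1 from rfl, Finset.sum_range_succ' _ (k + 2)]
  rw [show c1 (k + 2) 0 = 0 from zbinom_eq_zero (by omega),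
      show c0 (k + 2) 0 = 0 from zbinom_eq_zero (by omega)]
  simp only [Nat.cast_zero, zero_smul, add_zero, zero_add]
  rw [← Finset.sum_add_distrib]
  apply Finset.sum_congr rfl
  intro j _
  rw [pascal_c1, pascal_c0 _ _ hk]
  push_cast
  rw [add_smul, add_smul]
  abel

lemma f_eq_S (f : ℕ → H) (T : H →ₗ[ℂ] H)
    (h2 : f 2 = T (f 1) + T (f 0))
    (hrec : ∀ n, T (f n + f (n + 1)) = f (n + 2)) :
    ∀ k, 1 ≤ k → f k = S T (f 0) (f 1) k := by
  have key : ∀ k, f (k + 1) = S T (f 0) (f 1) (k + 1) ∧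
      f (k + 2) = S T (f 0) (f 1) (k + 2) := by
    intro k
    induction k with
    | zero => exact ⟨by rw [S_one], by rw [S_two]; exact h2⟩
    | succ m ih =>
      refine ⟨ih.2, ?_⟩
      have h := hrec (m + 1)
      rw [ih.1, ih.2] at h
      rw [← h, S_step _ _ _ _ (by omega)]
  intro k hk
  obtain ⟨m, rfl⟩ : ∃ m, k = m + 1 := ⟨k - 1, by omega⟩
  exact (key m).1

lemma rhs_eq_S (T : H →ₗ[ℂ] H) (x y : H) (n : ℕ) (hn : 4 ≤ n) (a : ℕ) (b : ℤ)
    (ha : a = (n - 1) / 2) (hb : b = (n : ℤ) - 2 * a - 2) :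
    (∑ i ∈ Finset.Icc a (2 * a),
        ((zbinom ((i : ℤ) + b) (2 * (i : ℤ) - 2 * (a : ℤ) + b) : ℂ) •
            (T ^ ((i : ℤ) + b).toNat) y +
         (zbinom ((i : ℤ) + b) (2 * (i : ℤ) - 2 * (a : ℤ) + b + 1) : ℂ) •
            (T ^ (((i : ℤ) + b).toNat + 1)) x))
    = S T x y (n - 1) := by
  rcases Nat.even_or_odd n with ⟨m, hm⟩ | ⟨m, hm⟩
  · -- even case : n = 2a + 2, b = 0
    have hb' : b = 0 := by omega
    subst hb'
    have hK : n - 1 = 2 * a + 1 := by omega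
    rw [hK]
    have trans : ∀ i ∈ Finset.Icc a (2 * a),
        ((zbinom ((i : ℤ) + 0) (2 * (i : ℤ) - 2 * (a : ℤ) + 0) : ℂ) •
            (T ^ ((i : ℤ) + 0).toNat) y +
         (zbinom ((i : ℤ) + 0) (2 * (i : ℤ) - 2 * (a : ℤ) + 0 + 1) : ℂ) •
            (T ^ (((i : ℤ) + 0).toNat + 1)) x)
        = ((c1 (2 * a + 1) i : ℂ) • (T ^ i) y +
           (c0 (2 * a + 1) (i + 1) : ℂ) • (T ^ (i + 1)) x) := by
      intro i _
      have ht : ((i : ℤ) + 0).toNat = i := by omega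
      rw [ht]
      have e1 : zbinom ((i : ℤ) + 0) (2 * (i : ℤ) - 2 * (a : ℤ) + 0) = c1 (2 * a + 1) i := by
        unfold c1; congr 1 <;> push_cast <;> ring
      have e0 : zbinom ((i : ℤ) + 0) (2 * (i : ℤ) - 2 * (a : ℤ) + 0 + 1)
          = c0 (2 * a + 1) (i + 1) := by
        unfold c0; congr 1 <;> push_cast <;> ring
      rw [e1, e0]
    rw [Finset.sum_congr rfl trans, Finset.sum_add_distrib]
    have hA : (∑ i ∈ Finset.Icc a (2 * a), (c1 (2 * a + 1) i : ℂ) • (T ^ i) y)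
        = ∑ j ∈ Finset.range (2 * a + 1 + 1), (c1 (2 * a + 1) j : ℂ) • (T ^ j) y := by
      apply Finset.sum_subset
      · intro j hj
        rw [Finset.mem_Icc] at hj; rw [Finset.mem_range]; omega
      · intro j hj hj'
        rw [Finset.mem_range] at hj; rw [Finset.mem_Icc] at hj'
        rw [c1_eq_zero (by omega)]; simp
    have hB : (∑ i ∈ Finset.Icc a (2 * a), (c0 (2 * a + 1) (i + 1) : ℂ) • (T ^ (i + 1)) x)
        = ∑ j ∈ Finset.range (2 * a + 1 + 1), (c0 (2 * a + 1) j : ℂ) • (T ^ j) x := by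
      refine (sum_shift_up (fun j => (c0 (2 * a + 1) j : ℂ) • (T ^ j) x) a (2 * a)).trans ?_
      apply Finset.sum_subset
      · intro j hj
        rw [Finset.mem_Icc] at hj; rw [Finset.mem_range]; omega
      · intro j hj hj'
        rw [Finset.mem_range] at hj; rw [Finset.mem_Icc] at hj'
        rw [c0_eq_zero (by omega)]; simp
    rw [hA, hB]
    unfold S
    rw [Finset.sum_add_distrib]
  · -- odd case : n = 2a + 1, b = -1
    have hb' : b = -1 := by omega
    subst hb'
    have ha2 : 2 ≤ a := by omega
    have hK : n - 1 = 2 * a := by omega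
    rw [hK]
    have trans : ∀ i ∈ Finset.Icc a (2 * a),
        ((zbinom ((i : ℤ) + -1) (2 * (i : ℤ) - 2 * (a : ℤ) + -1) : ℂ) •
            (T ^ ((i : ℤ) + -1).toNat) y +
         (zbinom ((i : ℤ) + -1) (2 * (i : ℤ) - 2 * (a : ℤ) + -1 + 1) : ℂ) •
            (T ^ (((i : ℤ) + -1).toNat + 1)) x)
        = ((c1 (2 * a) (i - 1) : ℂ) • (T ^ (i - 1)) y +
           (c0 (2 * a) i : ℂ) • (T ^ i) x) := by
      intro i hi
      rw [Finset.mem_Icc] at hi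
      have ht : ((i : ℤ) + -1).toNat = i - 1 := by omega
      have ht2 : i - 1 + 1 = i := by omega
      rw [ht, ht2]
      have e1 : zbinom ((i : ℤ) + -1) (2 * (i : ℤ) - 2 * (a : ℤ) + -1)
          = c1 (2 * a) (i - 1) := by
        unfold c1; congr 1 <;> omega
      have e0 : zbinom ((i : ℤ) + -1) (2 * (i : ℤ) - 2 * (a : ℤ) + -1 + 1)
          = c0 (2 * a) i := by
        unfold c0; congr 1 <;> omega
      rw [e1, e0]
    rw [Finset.sum_congr rfl trans, Finset.sum_add_distrib]
    have hA : (∑ i ∈ Finset.Icc a (2 * a), (c1 (2 * a) (i - 1) : ℂ) • (T ^ (i - 1)) y)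
        = ∑ j ∈ Finset.range (2 * a + 1), (c1 (2 * a) j : ℂ) • (T ^ j) y := by
      rw [show Finset.Icc a (2 * a) = Finset.Icc ((a - 1) + 1) ((2 * a - 1) + 1) from by
        congr 1 <;> omega]
      refine (sum_shift_down (fun j => (c1 (2 * a) j : ℂ) • (T ^ j) y)
        (a - 1) (2 * a - 1)).trans ?_
      apply Finset.sum_subset
      · intro j hj
        rw [Finset.mem_Icc] at hj; rw [Finset.mem_range]; omega
      · intro j hj hj'
        rw [Finset.mem_range] at hj; rw [Finset.mem_Icc] at hj'
        rw [c1_eq_zero (by omega)]; simp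
    have hB : (∑ i ∈ Finset.Icc a (2 * a), (c0 (2 * a) i : ℂ) • (T ^ i) x)
        = ∑ j ∈ Finset.range (2 * a + 1), (c0 (2 * a) j : ℂ) • (T ^ j) x := by
      apply Finset.sum_subset
      · intro j hj
        rw [Finset.mem_Icc] at hj; rw [Finset.mem_range]; omega
      · intro j hj hj'
        rw [Finset.mem_range] at hj; rw [Finset.mem_Icc] at hj'
        rw [c0_eq_zero (by omega)]; simp
    rw [hA, hB]
    unfold S
    rw [Finset.sum_add_distrib]

end Hilbert

/- Here `f : ℕ → H` is 0-indexed: `f 0, f 1, …` correspond to the paper's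
`f_1, f_2, …`, so the paper's `f_n` is `f (n - 1)`. -/
theorem stmt16 {H : Type*} [NormedAddCommGroup H] [InnerProductSpace ℂ H]
    [CompleteSpace H] (f : ℕ → H) (T : H →ₗ[ℂ] H)
    (hinv : ∀ x ∈ Submodule.span ℂ (Set.range f),
      T x ∈ Submodule.span ℂ (Set.range f)) :
    (∀ n : ℕ, T (f n + f (n + 1)) = f (n + 2)) ↔
      (T (f 0) + T (f 1) = f 2 ∧
        ∀ n : ℕ, 4 ≤ n → ∀ a : ℕ, ∀ b : ℤ,
          a = (n - 1) / 2 → b = (n : ℤ) - 2 * a - 2 →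
          f (n - 1) =
            ∑ i ∈ Finset.Icc a (2 * a),
              ((zbinom ((i : ℤ) + b) (2 * (i : ℤ) - 2 * (a : ℤ) + b) : ℂ) •
                  (T ^ ((i : ℤ) + b).toNat) (f 1) +
               (zbinom ((i : ℤ) + b) (2 * (i : ℤ) - 2 * (a : ℤ) + b + 1) : ℂ) •
                  (T ^ (((i : ℤ) + b).toNat + 1)) (f 0))) := by
  constructor
  · intro hrec
    have h2 : f 2 = T (f 1) + T (f 0) := by
      rw [← hrec 0, map_add]; abel
    refine ⟨by rw [← hrec 0, map_add], ?_⟩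
    intro n hn a b ha hb
    rw [f_eq_S f T h2 hrec (n - 1) (by omega), ← rhs_eq_S T (f 0) (f 1) n hn a b ha hb]
  · rintro ⟨h2, hfor⟩
    have h2' : f 2 = T (f 1) + T (f 0) := by rw [← h2]; abel
    have hS : ∀ k, 1 ≤ k → f k = S T (f 0) (f 1) k := by
      intro k hk
      rcases eq_or_lt_of_le hk with h1 | h1
      · rw [← h1, S_one]
      rcases eq_or_lt_of_le (show 2 ≤ k by omega) with h2'' | h2''
      · rw [← h2'', S_two]; exact h2'
      · -- k ≥ 3, use the closed formula at n = k + 1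
        have h := hfor (k + 1) (by omega) (k / 2)
          (((k + 1 : ℕ) : ℤ) - 2 * ((k / 2 : ℕ) : ℤ) - 2) (by omega) rfl
        rw [show k + 1 - 1 = k from rfl] at h
        rw [h]
        exact rhs_eq_S T (f 0) (f 1) (k + 1) (by omega) (k / 2) _ (by omega) rfl
    intro n
    cases n with
    | zero => rw [map_add]; exact h2
    | succ m =>
      rw [hS (m + 1) (by omega), hS (m + 2) (by omega), hS (m + 3) (by omega),
        ← S_step T (f 0) (f 1) (m + 1) (by omega)]
end

section
/- Let F = {f_n}_{n=1}^∞ be a Bessel sequence with Bessel bound B_F in a complex Hilbert space H, represented by a linear operator T₀ : span{f_n}_{n=1}^∞ → span{f_n}_{n=1}^∞ (so T₀(f_n + f_{n+1}) = f_{n+2} for all n ≥ 1), and let M = {f_n + f_{n+1}}_{n=1}^∞ be a frame for H with lower frame bound A_M. Then ker T_M ⊆ ker T_{F'}, where F' = {f_{n+2}}_{n=1}^∞, if and only if the restriction T of T₀ to span{f_n + f_{n+1}}_{n=1}^∞ is bounded with ‖T‖ ≤ √(B_F / A_M). -/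
open Finset
open scoped ENNReal

section Aux
variable {H : Type*} [NormedAddCommGroup H] [InnerProductSpace ℂ H]

local notation "⟪" x ", " y "⟫" => @inner ℂ _ _ x y

/-- Finite synthesis bound for a Bessel sequence. -/
lemma besselFinSynth (g : ℕ → H) (B : ℝ) (hB : 0 ≤ B)
    (hg : ∀ x : H, Summable (fun n => ‖(inner ℂ x (g n) : ℂ)‖ ^ 2) ∧
      ∑' n, ‖(inner ℂ x (g n) : ℂ)‖ ^ 2 ≤ B * ‖x‖ ^ 2)
    (c : ℕ → ℂ) (s : Finset ℕ) :
    ‖∑ n ∈ s, c n • g n‖ ^ 2 ≤ B * ∑ n ∈ s, ‖c n‖ ^ 2 := by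
  set v := ∑ n ∈ s, c n • g n with hv
  have hvv : (⟪v, v⟫ : ℂ) = ∑ n ∈ s, c n * ⟪v, g n⟫ := by
    rw [hv]
    conv_lhs => rw [inner_sum]
    exact Finset.sum_congr rfl fun n _ => inner_smul_right _ _ _
  have h1 : ‖v‖ ^ 2 ≤ ∑ n ∈ s, ‖c n‖ * ‖(⟪v, g n⟫ : ℂ)‖ := by
    calc ‖v‖ ^ 2 = RCLike.re (⟪v, v⟫ : ℂ) := (inner_self_eq_norm_sq v).symm
      _ ≤ ‖(⟪v, v⟫ : ℂ)‖ := RCLike.re_le_norm _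
      _ = ‖∑ n ∈ s, c n * ⟪v, g n⟫‖ := by rw [hvv]
      _ ≤ ∑ n ∈ s, ‖c n * ⟪v, g n⟫‖ := norm_sum_le _ _
      _ = ∑ n ∈ s, ‖c n‖ * ‖(⟪v, g n⟫ : ℂ)‖ := by simp [norm_mul]
  have h2 : (∑ n ∈ s, ‖c n‖ * ‖(⟪v, g n⟫ : ℂ)‖) ^ 2 ≤
      (∑ n ∈ s, ‖c n‖ ^ 2) * ∑ n ∈ s, ‖(⟪v, g n⟫ : ℂ)‖ ^ 2 :=
    Finset.sum_mul_sq_le_sq_mul_sq s _ _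
  have h3 : ∑ n ∈ s, ‖(⟪v, g n⟫ : ℂ)‖ ^ 2 ≤ B * ‖v‖ ^ 2 := by
    refine le_trans (Summable.sum_le_tsum s (fun n _ => sq_nonneg _) (hg v).1) (hg v).2
  have hQ : (0:ℝ) ≤ ∑ n ∈ s, ‖c n‖ ^ 2 := Finset.sum_nonneg fun n _ => sq_nonneg _
  have ht : (0:ℝ) ≤ ‖v‖ ^ 2 := sq_nonneg _
  rcases eq_or_lt_of_le ht with h0 | h0
  · rw [← h0]; positivity
  · have hmul : ‖v‖ ^ 2 * ‖v‖ ^ 2 ≤ (B * ∑ n ∈ s, ‖c n‖ ^ 2) * ‖v‖ ^ 2 := by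
      nlinarith [h1, h2, h3, ht, hQ]
    exact le_of_mul_le_mul_right hmul h0

/-- Synthesis of an ℓ² sequence with a Bessel sequence is summable. -/
lemma besselSynthSummable [CompleteSpace H] (g : ℕ → H) (B : ℝ) (hB : 0 ≤ B)
    (hg : ∀ x : H, Summable (fun n => ‖(inner ℂ x (g n) : ℂ)‖ ^ 2) ∧
      ∑' n, ‖(inner ℂ x (g n) : ℂ)‖ ^ 2 ≤ B * ‖x‖ ^ 2)
    (c : ℕ → ℂ) (hc : Summable fun n => ‖c n‖ ^ 2) :
    Summable fun n => c n • g n := by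
  rw [summable_iff_vanishing_norm]
  intro ε hε
  obtain ⟨s, hs⟩ := summable_iff_vanishing_norm.1 hc (ε ^ 2 / (B + 1)) (by positivity)
  refine ⟨s, fun t ht => ?_⟩
  have h1 := besselFinSynth g B hB hg c t
  have h2 := hs t ht
  have hQ : (0:ℝ) ≤ ∑ n ∈ t, ‖c n‖ ^ 2 := Finset.sum_nonneg fun n _ => sq_nonneg _
  have h2' : ∑ n ∈ t, ‖c n‖ ^ 2 < ε ^ 2 / (B + 1) := by
    rwa [Real.norm_eq_abs, abs_of_nonneg hQ] at h2
  have hlt : ‖∑ n ∈ t, c n • g n‖ ^ 2 < ε ^ 2 := by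
    have : B * ∑ n ∈ t, ‖c n‖ ^ 2 < ε ^ 2 := by
      calc B * ∑ n ∈ t, ‖c n‖ ^ 2 ≤ (B + 1) * ∑ n ∈ t, ‖c n‖ ^ 2 := by nlinarith
        _ < (B + 1) * (ε ^ 2 / (B + 1)) := by
            exact mul_lt_mul_of_pos_left h2' (by linarith)
        _ = ε ^ 2 := by field_simp
    linarith
  exact lt_of_pow_lt_pow_left₀ 2 hε.le hlt

/-- Norm bound for the full synthesis sum. -/
lemma besselHasSumBound (g : ℕ → H) (B : ℝ) (hB : 0 ≤ B)
    (hg : ∀ x : H, Summable (fun n => ‖(inner ℂ x (g n) : ℂ)‖ ^ 2) ∧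
      ∑' n, ‖(inner ℂ x (g n) : ℂ)‖ ^ 2 ≤ B * ‖x‖ ^ 2)
    (c : ℕ → ℂ) (x : H) (hx : HasSum (fun n => c n • g n) x)
    (hc : Summable fun n => ‖c n‖ ^ 2) :
    ‖x‖ ^ 2 ≤ B * ∑' n, ‖c n‖ ^ 2 := by
  have htend : Filter.Tendsto (fun s : Finset ℕ => ‖∑ n ∈ s, c n • g n‖ ^ 2)
      Filter.atTop (nhds (‖x‖ ^ 2)) := ((continuous_norm.tendsto x).comp hx).pow 2
  refine le_of_tendsto htend (Filter.Eventually.of_forall fun s => ?_)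
  calc ‖∑ n ∈ s, c n • g n‖ ^ 2 ≤ B * ∑ n ∈ s, ‖c n‖ ^ 2 := besselFinSynth g B hB hg c s
    _ ≤ B * ∑' n, ‖c n‖ ^ 2 :=
        mul_le_mul_of_nonneg_left (Summable.sum_le_tsum s (fun n _ => sq_nonneg _) hc) hB

end Aux

section Frame
variable {H : Type*} [NormedAddCommGroup H] [InnerProductSpace ℂ H]

local notation "⟪" x ", " y "⟫" => @inner ℂ _ _ x y

/-- Every vector has an ℓ² representation with norm control via the frame. -/
lemma frameRep [CompleteSpace H] (M : ℕ → H) (A B' : ℝ) (hA : 0 < A) (hB' : 0 < B')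
    (hfr : ∀ x : H, Summable (fun n => ‖(inner ℂ x (M n) : ℂ)‖ ^ 2) ∧
      A * ‖x‖ ^ 2 ≤ ∑' n, ‖(inner ℂ x (M n) : ℂ)‖ ^ 2 ∧
      ∑' n, ‖(inner ℂ x (M n) : ℂ)‖ ^ 2 ≤ B' * ‖x‖ ^ 2) (x : H) :
    ∃ d : ℕ → ℂ, Summable (fun n => ‖d n‖ ^ 2) ∧ HasSum (fun n => d n • M n) x ∧
      ∑' n, ‖d n‖ ^ 2 ≤ ‖x‖ ^ 2 / A := by
  have hup : ∀ y : H, Summable (fun n => ‖(inner ℂ y (M n) : ℂ)‖ ^ 2) ∧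
      ∑' n, ‖(inner ℂ y (M n) : ℂ)‖ ^ 2 ≤ B' * ‖y‖ ^ 2 := fun y => ⟨(hfr y).1, (hfr y).2.2⟩
  -- coefficient summability (with the reversed inner product)
  have hcoefEq : ∀ y : H, (fun n => ‖(⟪M n, y⟫ : ℂ)‖ ^ 2) = fun n => ‖(⟪y, M n⟫ : ℂ)‖ ^ 2 := by
    intro y; funext n; rw [norm_inner_symm]
  have hcoef : ∀ y : H, Summable fun n => ‖(⟪M n, y⟫ : ℂ)‖ ^ 2 := by
    intro y; rw [hcoefEq y]; exact (hfr y).1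
  have hsyn : ∀ y : H, Summable fun n => (⟪M n, y⟫ : ℂ) • M n := fun y =>
    besselSynthSummable M B' hB'.le hup _ (hcoef y)
  set Sfun : H → H := fun y => ∑' n, (⟪M n, y⟫ : ℂ) • M n with hSfun
  have hS : ∀ y : H, HasSum (fun n => (⟪M n, y⟫ : ℂ) • M n) (Sfun y) := fun y =>
    (hsyn y).hasSum
  have hadd : ∀ y z : H, Sfun (y + z) = Sfun y + Sfun z := by
    intro y z
    have h1 : HasSum (fun n => (⟪M n, y + z⟫ : ℂ) • M n) (Sfun y + Sfun z) := by
      have := (hS y).add (hS z)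
      convert this using 1
      funext n
      rw [inner_add_right, add_smul]
    exact h1.tsum_eq
  have hsmul : ∀ (a : ℂ) (y : H), Sfun (a • y) = a • Sfun y := by
    intro a y
    have h1 : HasSum (fun n => (⟪M n, a • y⟫ : ℂ) • M n) (a • Sfun y) := by
      have := (hS y).const_smul a
      convert this using 1
      funext n
      rw [inner_smul_right, mul_smul]
    exact h1.tsum_eq
  have hbound : ∀ y : H, ‖Sfun y‖ ≤ B' * ‖y‖ := by
    intro y
    have h1 : ‖Sfun y‖ ^ 2 ≤ B' * ∑' n, ‖(⟪M n, y⟫ : ℂ)‖ ^ 2 :=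
      besselHasSumBound M B' hB'.le hup _ _ (hS y) (hcoef y)
    have h2 : ∑' n, ‖(⟪M n, y⟫ : ℂ)‖ ^ 2 ≤ B' * ‖y‖ ^ 2 := by
      rw [hcoefEq y]; exact (hfr y).2.2
    have h3 : ‖Sfun y‖ ^ 2 ≤ (B' * ‖y‖) ^ 2 := by nlinarith [norm_nonneg y]
    exact (abs_le_of_sq_le_sq' h3 (by positivity)).2
  set S : H →L[ℂ] H := LinearMap.mkContinuous
    { toFun := Sfun, map_add' := hadd, map_smul' := hsmul } B' hbound with hSdef
  have hSapp : ∀ y : H, S y = Sfun y := fun y => rfl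
  -- the quadratic form of S
  have hquad : ∀ y : H, (⟪y, S y⟫ : ℂ) = (∑' n, ‖(⟪y, M n⟫ : ℂ)‖ ^ 2 : ℝ) := by
    intro y
    have h1 : HasSum (fun n => (⟪y, (⟪M n, y⟫ : ℂ) • M n⟫ : ℂ)) (⟪y, S y⟫ : ℂ) := by
      rw [hSapp]
      exact (innerSL ℂ y).hasSum (hS y)
    have h2 : HasSum (fun n => ((‖(⟪y, M n⟫ : ℂ)‖ ^ 2 : ℝ) : ℂ)) (⟪y, S y⟫ : ℂ) := by
      convert h1 using 1
      funext n
      rw [inner_smul_right, ← inner_conj_symm (M n) y, RCLike.conj_mul]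
      norm_cast
    have h3 : HasSum (fun n => ((‖(⟪y, M n⟫ : ℂ)‖ ^ 2 : ℝ) : ℂ))
        ((∑' n, ‖(⟪y, M n⟫ : ℂ)‖ ^ 2 : ℝ) : ℂ) := by
      exact Complex.hasSum_ofReal.2 (hfr y).1.hasSum
    exact h2.unique h3
  have hlow : ∀ y : H, A * ‖y‖ ^ 2 ≤ RCLike.re (⟪y, S y⟫ : ℂ) := by
    intro y
    rw [hquad y]
    simpa using (hfr y).2.1
  have hSlow : ∀ y : H, A * ‖y‖ ≤ ‖S y‖ := by
    intro y
    rcases eq_or_ne y 0 with rfl | hy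
    · simp
    have h1 : A * ‖y‖ ^ 2 ≤ ‖y‖ * ‖S y‖ := by
      calc A * ‖y‖ ^ 2 ≤ RCLike.re (⟪y, S y⟫ : ℂ) := hlow y
        _ ≤ ‖(⟪y, S y⟫ : ℂ)‖ := RCLike.re_le_norm _
        _ ≤ ‖y‖ * ‖S y‖ := norm_inner_le_norm _ _
    have hy' : 0 < ‖y‖ := norm_pos_iff.2 hy
    nlinarith [h1, hy']
  -- surjectivity of S
  have hanti : AntilipschitzWith (⟨A, hA.le⟩ : NNReal)⁻¹ S := by
    refine S.antilipschitz_of_bound fun y => ?_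
    have := hSlow y
    show ‖y‖ ≤ A⁻¹ * ‖S y‖
    rw [inv_mul_eq_div, le_div_iff₀ hA, mul_comm]
    exact this
  have hclosed : IsClosed (Set.range S) := hanti.isClosed_range S.uniformContinuous
  have hclosed' : IsClosed ((LinearMap.range (S : H →ₗ[ℂ] H) : Submodule ℂ H) : Set H) := by
    rw [LinearMap.coe_range]; exact hclosed
  haveI : CompleteSpace (LinearMap.range (S : H →ₗ[ℂ] H) : Submodule ℂ H) := hclosed'.completeSpace_coe
  have horth : (LinearMap.range (S : H →ₗ[ℂ] H) : Submodule ℂ H)ᗮ = ⊥ := by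
    rw [Submodule.eq_bot_iff]
    intro y hy
    have h0 : (⟪S y, y⟫ : ℂ) = 0 := hy (S y) (LinearMap.mem_range_self _ y)
    have h1 : RCLike.re (⟪y, S y⟫ : ℂ) = 0 := by
      rw [← inner_conj_symm]
      rw [h0]
      simp
    have := hlow y
    rw [h1] at this
    have hy2 : ‖y‖ ^ 2 ≤ 0 := by nlinarith
    have : ‖y‖ = 0 := by nlinarith [sq_nonneg ‖y‖, norm_nonneg y]
    exact norm_eq_zero.1 this
  have hrange : (LinearMap.range (S : H →ₗ[ℂ] H) : Submodule ℂ H) = ⊤ :=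
    Submodule.orthogonal_eq_bot_iff.1 horth
  obtain ⟨u, hu⟩ : ∃ u : H, S u = x := by
    have : x ∈ (LinearMap.range (S : H →ₗ[ℂ] H) : Submodule ℂ H) := by rw [hrange]; trivial
    exact this
  refine ⟨fun n => (⟪M n, u⟫ : ℂ), hcoef u, ?_, ?_⟩
  · have := hS u
    rw [← hSapp u, hu] at this
    exact this
  · have h1 : ∑' n, ‖(⟪M n, u⟫ : ℂ)‖ ^ 2 = RCLike.re (⟪u, S u⟫ : ℂ) := by
      rw [hquad u]
      rw [hcoefEq u]
      simp
    have h2 : RCLike.re (⟪u, x⟫ : ℂ) ≤ ‖u‖ * ‖x‖ :=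
      le_trans (RCLike.re_le_norm _) (norm_inner_le_norm _ _)
    have h3 : ‖u‖ ≤ ‖x‖ / A := by
      rw [le_div_iff₀ hA, mul_comm]
      calc A * ‖u‖ ≤ ‖S u‖ := hSlow u
        _ = ‖x‖ := by rw [hu]
    calc ∑' n, ‖(⟪M n, u⟫ : ℂ)‖ ^ 2 = RCLike.re (⟪u, S u⟫ : ℂ) := h1
      _ = RCLike.re (⟪u, x⟫ : ℂ) := by rw [hu]
      _ ≤ ‖u‖ * ‖x‖ := h2
      _ ≤ (‖x‖ / A) * ‖x‖ := by
          exact mul_le_mul_of_nonneg_right h3 (norm_nonneg x)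
      _ = ‖x‖ ^ 2 / A := by ring

end Frame

lemma memℓp_two_iff {e : ℕ → ℂ} : Memℓp e 2 ↔ Summable fun n => ‖e n‖ ^ 2 := by
  have h : ∀ n, ‖e n‖ ^ (2 : ℝ≥0∞).toReal = ‖e n‖ ^ 2 := by
    intro n
    rw [show (2 : ℝ≥0∞).toReal = ((2 : ℕ) : ℝ) by norm_num, Real.rpow_natCast]
  rw [memℓp_gen_iff (by norm_num)]
  simp only [h]

theorem stmt17 {H : Type*} [NormedAddCommGroup H] [InnerProductSpace ℂ H]
    [CompleteSpace H] (f : ℕ → H) (B A : ℝ) (hB : 0 < B) (hA : 0 < A)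
    -- `F` is a Bessel sequence with Bessel bound `B`:
    (hF : ∀ x : H, Summable (fun n => ‖(inner ℂ x (f n) : ℂ)‖ ^ 2) ∧
      ∑' n, ‖(inner ℂ x (f n) : ℂ)‖ ^ 2 ≤ B * ‖x‖ ^ 2)
    -- `M = {fₙ + fₙ₊₁}` is a frame with lower frame bound `A`:
    (hM : ∃ B' : ℝ, 0 < B' ∧ ∀ x : H,
      Summable (fun n => ‖(inner ℂ x (f n + f (n + 1)) : ℂ)‖ ^ 2) ∧
      A * ‖x‖ ^ 2 ≤ ∑' n, ‖(inner ℂ x (f n + f (n + 1)) : ℂ)‖ ^ 2 ∧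
      ∑' n, ‖(inner ℂ x (f n + f (n + 1)) : ℂ)‖ ^ 2 ≤ B' * ‖x‖ ^ 2)
    -- `T₀` represents `F`:
    (T₀ : H →ₗ[ℂ] H)
    (hinv : ∀ x ∈ Submodule.span ℂ (Set.range f),
      T₀ x ∈ Submodule.span ℂ (Set.range f))
    (hrep : ∀ n : ℕ, T₀ (f n + f (n + 1)) = f (n + 2)) :
    synthKer (fun n => f n + f (n + 1)) ⊆ synthKer (fun n => f (n + 2)) ↔
      ∀ x ∈ Submodule.span ℂ (Set.range (fun n => f n + f (n + 1))),
        ‖T₀ x‖ ≤ Real.sqrt (B / A) * ‖x‖ := by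
  obtain ⟨B', hB', hfr⟩ := hM
  set M : ℕ → H := fun n => f n + f (n + 1) with hMdef
  constructor
  · intro hker x hx
    obtain ⟨c₀, hc₀⟩ := Finsupp.mem_span_range_iff_exists_finsupp.mp hx
    set c : ℕ → ℂ := fun n => c₀ n with hcdef
    have hzero : ∀ n ∉ c₀.support, c n • M n = 0 := by
      intro n hn
      simp [hcdef, Finsupp.notMem_support_iff.1 hn]
    have hxsum : ∑ n ∈ c₀.support, c n • M n = x := by
      rw [← hc₀, Finsupp.sum]
    have hcsum : HasSum (fun n => c n • M n) x := by
      rw [← hxsum]; exact hasSum_sum_of_ne_finset_zero hzero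
    have hTx : T₀ x = ∑ n ∈ c₀.support, c n • f (n + 2) := by
      rw [← hxsum, map_sum]
      refine Finset.sum_congr rfl fun n _ => ?_
      rw [map_smul]
      congr 1
      exact hrep n
    have hcf : HasSum (fun n => c n • f (n + 2)) (T₀ x) := by
      rw [hTx]
      refine hasSum_sum_of_ne_finset_zero ?_
      intro n hn
      simp [hcdef, Finsupp.notMem_support_iff.1 hn]
    obtain ⟨d, hd2, hdsum, hdle⟩ := frameRep M A B' hA hB' hfr x
    have hc2 : Summable fun n => ‖c n‖ ^ 2 := by
      refine summable_of_ne_finset_zero (s := c₀.support) ?_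
      intro n hn
      simp [hcdef, Finsupp.notMem_support_iff.1 hn]
    have hcd : c - d ∈ synthKer M := by
      refine ⟨(memℓp_two_iff.2 hc2).sub (memℓp_two_iff.2 hd2), ?_⟩
      have h := hcsum.sub hdsum
      rw [sub_self] at h
      convert h using 1
      funext n
      simp [sub_smul]
    have hk := hker hcd
    have hdsum' : HasSum (fun n => d n • f (n + 2)) (T₀ x) := by
      have h := hcf.sub hk.2
      rw [sub_zero] at h
      convert h using 1
      funext n
      simp [sub_smul]
    have hF' : ∀ y : H, Summable (fun n => ‖(inner ℂ y (f (n + 2)) : ℂ)‖ ^ 2) ∧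
        ∑' n, ‖(inner ℂ y (f (n + 2)) : ℂ)‖ ^ 2 ≤ B * ‖y‖ ^ 2 := by
      intro y
      have hinj : Function.Injective (fun n : ℕ => n + 2) := add_left_injective 2
      have hsum : Summable ((fun n => ‖(inner ℂ y (f n) : ℂ)‖ ^ 2) ∘ fun n => n + 2) :=
        (hF y).1.comp_injective hinj
      refine ⟨hsum, ?_⟩
      calc ∑' n, ‖(inner ℂ y (f (n + 2)) : ℂ)‖ ^ 2
          ≤ ∑' n, ‖(inner ℂ y (f n) : ℂ)‖ ^ 2 :=
            tsum_comp_le_tsum_of_inj (hF y).1 (fun n => sq_nonneg _) hinj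
        _ ≤ B * ‖y‖ ^ 2 := (hF y).2
    have hb := besselHasSumBound (fun n => f (n + 2)) B hB.le hF' d (T₀ x) hdsum' hd2
    have h2 : ‖T₀ x‖ ^ 2 ≤ (B / A) * ‖x‖ ^ 2 := by
      calc ‖T₀ x‖ ^ 2 ≤ B * ∑' n, ‖d n‖ ^ 2 := hb
        _ ≤ B * (‖x‖ ^ 2 / A) := mul_le_mul_of_nonneg_left hdle hB.le
        _ = (B / A) * ‖x‖ ^ 2 := by ring
    have h3 : (Real.sqrt (B / A) * ‖x‖) ^ 2 = (B / A) * ‖x‖ ^ 2 := by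
      rw [mul_pow, Real.sq_sqrt (by positivity)]
    exact (abs_le_of_sq_le_sq' (by rw [h3]; exact h2) (by positivity)).2
  · intro hbd c hc
    obtain ⟨hcl2, hc0⟩ := hc
    refine ⟨hcl2, ?_⟩
    have key : ∀ s : Finset ℕ,
        ‖∑ n ∈ s, c n • f (n + 2)‖ ≤ Real.sqrt (B / A) * ‖∑ n ∈ s, c n • M n‖ := by
      intro s
      have hmem : ∑ n ∈ s, c n • M n ∈ Submodule.span ℂ (Set.range M) :=
        Submodule.sum_mem _ fun n _ => Submodule.smul_mem _ _ (Submodule.subset_span ⟨n, rfl⟩)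
      have h := hbd _ hmem
      have hT : T₀ (∑ n ∈ s, c n • M n) = ∑ n ∈ s, c n • f (n + 2) := by
        rw [map_sum]
        refine Finset.sum_congr rfl fun n _ => ?_
        rw [map_smul]
        congr 1
        exact hrep n
      rwa [hT] at h
    have h0 : Filter.Tendsto (fun s : Finset ℕ => ∑ n ∈ s, c n • M n)
        Filter.atTop (nhds 0) := hc0
    have h1 : Filter.Tendsto (fun s : Finset ℕ =>
        Real.sqrt (B / A) * ‖∑ n ∈ s, c n • M n‖) Filter.atTop (nhds 0) := by
      have h2 := h0.norm
      rw [norm_zero] at h2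
      simpa using h2.const_mul (Real.sqrt (B / A))
    exact squeeze_zero_norm key h1
end
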